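/- Let E be a real normed vector space, let f, g, σ : ℝ → ℝ, let ε_c, ε_∅ : E → ℝ → E, let ω ∈ ℝ, and define Δε(x, t) := ε_c(x, t) − ε_∅(x, t). Fix t ∈ ℝ and suppose xT, xH : ℝ → E satisfy: xT has derivative f(t) • xT(t) + (g(t)² / (2·σ(t))) • ε_c(xT(t) + xH(t), t) at t, and xH has derivative f(t) • xH(t) + ((g(t)² / (2·σ(t))) · (ω − 1)) • Δε(xT(t) + xH(t), t) at t. Then the function x := xT + xH has derivative f(t) • x(t) + (g(t)² / (2·σ(t))) • (ε_∅(x(t), t) + ω • Δε(x(t), t)) at t. -/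

import Mathlib

theorem cfg_multirate_splitting
    {E : Type*} [NormedAddCommGroup E] [NormedSpace ℝ E]
    (f g σ : ℝ → ℝ) (εc ε0 : E → ℝ → E) (ω : ℝ)
    (Δε : E → ℝ → E) (hΔε : ∀ x s, Δε x s = εc x s - ε0 x s)
    (t : ℝ) (xT xH : ℝ → E)
    (hT : HasDerivAt xT
      (f t • xT t + (g t ^ 2 / (2 * σ t)) • εc (xT t + xH t) t) t)
    (hH : HasDerivAt xH
      (f t • xH t + ((g t ^ 2 / (2 * σ t)) * (ω - 1)) • Δε (xT t + xH t) t) t) :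
    HasDerivAt (fun s => xT s + xH s)
      (f t • (xT t + xH t) + (g t ^ 2 / (2 * σ t)) •
        (ε0 (xT t + xH t) t + ω • Δε (xT t + xH t) t)) t := by
  have h := hT.add hH
  convert h using 1
  · rfl
  rw [hΔε]
  module
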